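/- Let s ≥ 1 and 0 ≤ r ≤ s with s ≤ 2r + 1. Let G(s, r) be the Reed–Muller generator matrix over F_2 (rows indexed by subsets T with |T| ≤ r, columns by all subsets S, entry 1 iff T ⊆ S), and consider the unified encoder u ↦ u·G(s, r)^T·G(s, r) for u ∈ F_2^{2^s}, with key coordinates A^c = {S : |S| > r} and message coordinates A = {S : |S| ≤ r}. Then for any u, u' ∈ F_2^{2^s} that agree on all coordinates in A^c (same key) and differ on A (distinct messages), the encodings u·G(s, r)^T·G(s, r) and u'·G(s, r)^T·G(s, r) differ in at least 2^{s−r} coordinates. Consequently, given the key, the message is uniquely determined by the codeword even after any ρ ≤ 2^{s−r} − 1 coordinates of the codeword are erased. -/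

import Mathlib

open Matrix

/-- The Reed–Muller generator matrix `G(s, r)` over `F₂`: rows indexed by subsets
`T ⊆ {1,…,s}` with `|T| ≤ r`, columns indexed by all subsets `S ⊆ {1,…,s}`, entry `1` iff
`T ⊆ S`. -/
def rmGen (s r : ℕ) :
    Matrix {T : Finset (Fin s) // T.card ≤ r} (Finset (Fin s)) (ZMod 2) :=
  Matrix.of fun T S => if T.1 ⊆ S then 1 else 0

/-- The unified robust RM-based encoder `u ↦ u · G(s,r)ᵀ · G(s,r)`. -/
noncomputable def rmUnifiedEnc (s r : ℕ) (u : Finset (Fin s) → ZMod 2) :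
    Finset (Fin s) → ZMod 2 :=
  Matrix.vecMul (Matrix.vecMul u (rmGen s r)ᵀ) (rmGen s r)

lemma sdiff_subset_iff' {α : Type*} [DecidableEq α] (s t u : Finset α) :
    s \ t ⊆ u ↔ s ⊆ t ∪ u := by
  constructor
  · intro h x hx
    by_cases hxt : x ∈ t
    · exact Finset.mem_union_left _ hxt
    · exact Finset.mem_union_right _ (h (Finset.mem_sdiff.2 ⟨hx, hxt⟩))
  · intro h x hx
    rcases Finset.mem_sdiff.1 hx with ⟨h1, h2⟩
    rcases Finset.mem_union.1 (h h1) with h3 | h3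
    · exact absurd h3 h2
    · exact h3

/-- Minimum weight of nonzero RM codewords, written as sums over powersets. -/
lemma rm_min_weight (s r : ℕ) (w : Finset (Fin s) → ZMod 2)
    (hsupp : ∀ T, w T ≠ 0 → T.card ≤ r) (T₀ : Finset (Fin s)) (h0 : w T₀ ≠ 0)
    (hmax : ∀ T, w T ≠ 0 → T.card ≤ T₀.card) :
    2 ^ (s - r) ≤ (Finset.univ.filter
      (fun S : Finset (Fin s) => (∑ T ∈ S.powerset, w T) ≠ 0)).card := by
  -- key identity: for U disjoint from T₀, the sum over the subcube is w T₀
  have hdisj : ∀ U : Finset (Fin s), U ⊆ T₀ᶜ → Disjoint U T₀ := by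
    intro U hU
    exact Finset.disjoint_left.2 fun x hx hx' =>
      (Finset.mem_compl.1 (hU hx)) hx'
  have key : ∀ U : Finset (Fin s), U ⊆ T₀ᶜ →
      (∑ V ∈ T₀.powerset, ∑ T ∈ (V ∪ U).powerset, w T) = w T₀ := by
    intro U hU
    have hpow : ∀ V : Finset (Fin s),
        (∑ T ∈ (V ∪ U).powerset, w T) = ∑ T : Finset (Fin s),
          if T ⊆ V ∪ U then w T else 0 := by
      intro V
      rw [← Finset.sum_filter]
      apply Finset.sum_congr _ (fun _ _ => rfl)
      ext T
      simp only [Finset.mem_powerset, Finset.mem_filter, Finset.mem_univ, true_and]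
    calc (∑ V ∈ T₀.powerset, ∑ T ∈ (V ∪ U).powerset, w T)
        = ∑ V ∈ T₀.powerset, ∑ T : Finset (Fin s), if T ⊆ V ∪ U then w T else 0 := by
          exact Finset.sum_congr rfl fun V _ => hpow V
      _ = ∑ T : Finset (Fin s), ∑ V ∈ T₀.powerset, if T ⊆ V ∪ U then w T else 0 :=
          Finset.sum_comm
      _ = ∑ T : Finset (Fin s), if T = T₀ then w T₀ else 0 := by
          apply Finset.sum_congr rfl
          intro T _
          rw [← Finset.sum_filter, Finset.sum_const]
          by_cases hT : T = T₀
          · rw [if_pos hT, hT]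
            have : Finset.filter (fun V => T₀ ⊆ V ∪ U) T₀.powerset
                = ({T₀} : Finset (Finset (Fin s))) := by
              ext V
              simp only [Finset.mem_filter, Finset.mem_powerset, Finset.mem_singleton]
              constructor
              · rintro ⟨h1, h2⟩
                refine Finset.Subset.antisymm h1 ?_
                intro x hx
                rcases Finset.mem_union.1 (h2 hx) with h3 | h3
                · exact h3
                · exact absurd hx (Finset.mem_compl.1 (hU h3))
              · rintro rfl
                exact ⟨Finset.Subset.refl _, Finset.subset_union_left⟩
            rw [this]
            simp
          · simp only [hT, if_false]
            by_cases hw : w T = 0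
            · simp [hw]
            · -- the filtered set is an interval of even cardinality
              by_cases hsub : T \ U ⊆ T₀
              · have hset : T₀.powerset.filter (fun V => T ⊆ V ∪ U)
                    = Finset.Icc (T \ U) T₀ := by
                  ext V
                  simp only [Finset.mem_filter, Finset.mem_powerset, Finset.mem_Icc,
                    ← Finset.le_iff_subset]
                  constructor
                  · rintro ⟨h1, h2⟩
                    refine ⟨?_, h1⟩
                    rw [Finset.le_iff_subset, sdiff_subset_iff', Finset.union_comm]
                    exact h2
                  · rintro ⟨h1, h2⟩
                    refine ⟨h2, ?_⟩
                    rw [Finset.le_iff_subset, sdiff_subset_iff', Finset.union_comm] at h1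
                    exact h1
                rw [hset, Finset.card_Icc_finset hsub]
                have hlt : (T \ U).card < T₀.card := by
                  rcases Nat.lt_or_ge (T \ U).card T₀.card with h | h
                  · exact h
                  · exfalso
                    have heq : T \ U = T₀ :=
                      Finset.eq_of_subset_of_card_le hsub h
                    have hT0T : T₀ ⊆ T := heq ▸ Finset.sdiff_subset
                    have : T = T₀ :=
                      (Finset.eq_of_subset_of_card_le hT0T (hmax T hw)).symm
                    exact hT this
                obtain ⟨m, hm⟩ : ∃ m, T₀.card - (T \ U).card = m + 1 :=
                  ⟨T₀.card - (T \ U).card - 1, by omega⟩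
                have h2 : ∀ x : ZMod 2, (2 : ℕ) • x = 0 := by decide
                rw [hm, pow_succ, mul_nsmul, h2]
              · have hset : T₀.powerset.filter (fun V => T ⊆ V ∪ U) = ∅ := by
                  ext V
                  simp only [Finset.mem_filter, Finset.mem_powerset,
                    Finset.notMem_empty, iff_false, not_and]
                  intro h1 h2
                  rw [Finset.union_comm] at h2
                  exact hsub (Finset.Subset.trans ((sdiff_subset_iff' T U V).2 h2) h1)
                rw [hset]
                simp
      _ = w T₀ := by rw [Finset.sum_ite_eq' Finset.univ T₀ (fun _ => w T₀)]; simp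
  -- from the key identity, each subcube contains a nonzero coordinate
  have key2 : ∀ U : Finset (Fin s), ∃ S : Finset (Fin s),
      U ⊆ T₀ᶜ → ((∑ T ∈ S.powerset, w T) ≠ 0 ∧ S \ T₀ = U) := by
    intro U
    by_cases hU : U ⊆ T₀ᶜ
    · have hsum := key U hU
      have : (∑ V ∈ T₀.powerset, ∑ T ∈ (V ∪ U).powerset, w T) ≠ 0 := by
        rw [hsum]; exact h0
      obtain ⟨V, hV, hVne⟩ := Finset.exists_ne_zero_of_sum_ne_zero this
      refine ⟨V ∪ U, fun _ => ⟨hVne, ?_⟩⟩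
      have hVT : V ⊆ T₀ := Finset.mem_powerset.1 hV
      rw [Finset.union_sdiff_distrib,
        Finset.sdiff_eq_empty_iff_subset.2 hVT, Finset.empty_union,
        (Finset.sdiff_eq_self_iff_disjoint).2 (hdisj U hU)]
    · exact ⟨∅, fun h => absurd h hU⟩
  choose g hg using key2
  have hinj : (T₀ᶜ.powerset).card ≤ (Finset.univ.filter
      (fun S : Finset (Fin s) => (∑ T ∈ S.powerset, w T) ≠ 0)).card := by
    apply Finset.card_le_card_of_injOn g
    · intro U hU
      simp only [Finset.mem_coe, Finset.mem_filter, Finset.mem_univ, true_and]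
      exact (hg U (Finset.mem_powerset.1 hU)).1
    · intro U hU U' hU' hgeq
      have h1 := (hg U (Finset.mem_powerset.1 (Finset.mem_coe.1 hU))).2
      have h2 := (hg U' (Finset.mem_powerset.1 (Finset.mem_coe.1 hU'))).2
      rw [← h1, ← h2, hgeq]
  calc 2 ^ (s - r) ≤ 2 ^ (s - T₀.card) :=
        Nat.pow_le_pow_right (by norm_num)
          (Nat.sub_le_sub_left (hsupp T₀ h0) s)
    _ = T₀ᶜ.powerset.card := by
        rw [Finset.card_powerset, Finset.card_compl, Fintype.card_fin]
    _ ≤ _ := hinj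

/-- The encoding of `e` written as a powerset sum of coefficients. -/
lemma enc_eq_sum (s r : ℕ) (e : Finset (Fin s) → ZMod 2) (S : Finset (Fin s)) :
    rmUnifiedEnc s r e S = ∑ T ∈ S.powerset,
      (if T.card ≤ r then ∑ S' : Finset (Fin s), e S' * (if T ⊆ S' then 1 else 0)
       else 0) := by
  have lhs : rmUnifiedEnc s r e S = ∑ T : {T : Finset (Fin s) // T.card ≤ r},
      (∑ S' : Finset (Fin s), e S' * (if T.1 ⊆ S' then 1 else 0))
        * (if T.1 ⊆ S then 1 else 0) := by
    simp [rmUnifiedEnc, Matrix.vecMul, dotProduct, rmGen, Matrix.transpose_apply]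
  rw [lhs, ← Finset.sum_subtype (Finset.univ.filter (fun T : Finset (Fin s) => T.card ≤ r))
    (by simp) (fun T => (∑ S' : Finset (Fin s), e S' * (if T ⊆ S' then 1 else 0))
        * (if T ⊆ S then 1 else 0))]
  rw [Finset.sum_filter]
  have hps : S.powerset = Finset.univ.filter (fun T : Finset (Fin s) => T ⊆ S) := by
    ext T
    simp only [Finset.mem_powerset, Finset.mem_filter, Finset.mem_univ, true_and]
  rw [hps, Finset.sum_filter]
  apply Finset.sum_congr rfl
  intro T _
  split_ifs <;> ring

/-- Core distance bound for the encoder. -/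
lemma enc_dist (s r : ℕ) (u u' : Finset (Fin s) → ZMod 2)
    (hkey : ∀ S : Finset (Fin s), r < S.card → u S = u' S)
    (hmsg : ∃ S : Finset (Fin s), S.card ≤ r ∧ u S ≠ u' S) :
    2 ^ (s - r) ≤ (Finset.univ.filter
      (fun S : Finset (Fin s) => rmUnifiedEnc s r u S ≠ rmUnifiedEnc s r u' S)).card := by
  obtain ⟨S₁, hS₁card, hS₁ne⟩ := hmsg
  set e : Finset (Fin s) → ZMod 2 := u - u' with he
  have hek : ∀ S : Finset (Fin s), r < S.card → e S = 0 := by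
    intro S hS
    simp only [he, Pi.sub_apply, sub_eq_zero]
    exact hkey S hS
  have heS₁ : e S₁ ≠ 0 := by
    simp only [he, Pi.sub_apply]
    exact sub_ne_zero.2 hS₁ne
  have hencsub : rmUnifiedEnc s r e = rmUnifiedEnc s r u - rmUnifiedEnc s r u' := by
    unfold rmUnifiedEnc
    rw [he, Matrix.sub_vecMul, Matrix.sub_vecMul]
  -- maximal element of the support of e
  set D : Finset (Finset (Fin s)) := Finset.univ.filter (fun S => e S ≠ 0) with hD
  have hDne : D.Nonempty := ⟨S₁, by simp [hD, heS₁]⟩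
  obtain ⟨T₀, hT₀D, hT₀max⟩ := Finset.exists_max_image D (fun S => S.card) hDne
  have heT₀ : e T₀ ≠ 0 := by simpa [hD] using hT₀D
  have hT₀card : T₀.card ≤ r := by
    by_contra h
    exact heT₀ (hek T₀ (Nat.lt_of_not_le h))
  have hT₀max' : ∀ S : Finset (Fin s), e S ≠ 0 → S.card ≤ T₀.card := by
    intro S hS
    exact hT₀max S (by simp [hD, hS])
  -- the coefficient vector
  set w : Finset (Fin s) → ZMod 2 := fun T =>
    if T.card ≤ r then ∑ S' : Finset (Fin s), e S' * (if T ⊆ S' then 1 else 0) else 0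
    with hw
  have hsupp : ∀ T, w T ≠ 0 → T.card ≤ r := by
    intro T hT
    by_contra h
    exact hT (by simp [hw, h])
  have hwT₀ : w T₀ = e T₀ := by
    rw [hw]
    simp only [if_pos hT₀card]
    rw [Finset.sum_eq_single T₀]
    · simp
    · intro S' _ hne
      by_cases hsub : T₀ ⊆ S'
      · have : e S' = 0 := by
          by_contra hS'
          exact hne ((Finset.eq_of_subset_of_card_le hsub (hT₀max' S' hS')).symm)
        simp [this]
      · simp [hsub]
    · intro h
      exact absurd (Finset.mem_univ T₀) h
  have hwT₀ne : w T₀ ≠ 0 := by rw [hwT₀]; exact heT₀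
  have hmaxw : ∀ T, w T ≠ 0 → T.card ≤ T₀.card := by
    intro T hT
    have hTr : T.card ≤ r := hsupp T hT
    have : (∑ S' : Finset (Fin s), e S' * (if T ⊆ S' then 1 else 0)) ≠ 0 := by
      intro h
      exact hT (by simp only [hw]; rw [if_pos hTr]; exact h)
    obtain ⟨S', _, hS'⟩ := Finset.exists_ne_zero_of_sum_ne_zero this
    have heS' : e S' ≠ 0 := fun h => hS' (by simp [h])
    have hsub : T ⊆ S' := by
      by_contra h
      exact hS' (by simp [h])
    exact le_trans (Finset.card_le_card hsub) (hT₀max' S' heS')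
  have hfilter : (Finset.univ.filter
      (fun S : Finset (Fin s) => rmUnifiedEnc s r u S ≠ rmUnifiedEnc s r u' S))
      = (Finset.univ.filter
      (fun S : Finset (Fin s) => (∑ T ∈ S.powerset, w T) ≠ 0)) := by
    apply Finset.filter_congr
    intro S _
    have h1 : rmUnifiedEnc s r e S = ∑ T ∈ S.powerset, w T := enc_eq_sum s r e S
    have h2 : rmUnifiedEnc s r e S = rmUnifiedEnc s r u S - rmUnifiedEnc s r u' S := by
      rw [hencsub]; rfl
    rw [← h1, h2]
    simp [sub_ne_zero]
  rw [hfilter]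
  exact rm_min_weight s r w hsupp T₀ hwT₀ne hmaxw

/-- Robustness of the unified RM-based encoder.  For `s ≤ 2r + 1`, any two
inputs `u, u'` agreeing on all key coordinates `A^c = {S : |S| > r}` (same key) but differing
on some message coordinate in `A = {S : |S| ≤ r}` (distinct messages) have encodings
differing in at least `2^(s-r)` coordinates.  Consequently, given the key, the message is
uniquely determined by the codeword even after any set `E` of at most `2^(s-r) - 1`
coordinates of the codeword is erased. -/
theorem stmt_16 (s r : ℕ) (hs : 1 ≤ s) (hr : r ≤ s) (hsr : s ≤ 2 * r + 1) :
    (∀ u u' : Finset (Fin s) → ZMod 2,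
      (∀ S : Finset (Fin s), r < S.card → u S = u' S) →
      (∃ S : Finset (Fin s), S.card ≤ r ∧ u S ≠ u' S) →
      2 ^ (s - r) ≤ (Finset.univ.filter
        (fun S : Finset (Fin s) => rmUnifiedEnc s r u S ≠ rmUnifiedEnc s r u' S)).card)
    ∧ (∀ E : Finset (Finset (Fin s)), E.card ≤ 2 ^ (s - r) - 1 →
      ∀ u u' : Finset (Fin s) → ZMod 2,
        (∀ S : Finset (Fin s), r < S.card → u S = u' S) →
        (∀ S : Finset (Fin s), S ∉ E → rmUnifiedEnc s r u S = rmUnifiedEnc s r u' S) →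
        u = u') := by
  constructor
  · exact fun u u' hkey hmsg => enc_dist s r u u' hkey hmsg
  · intro E hE u u' hkey henc
    by_contra hne
    have : ∃ S : Finset (Fin s), S.card ≤ r ∧ u S ≠ u' S := by
      obtain ⟨S, hS⟩ := Function.ne_iff.1 hne
      refine ⟨S, ?_, hS⟩
      by_contra h
      exact hS (hkey S (Nat.lt_of_not_le h))
    have hdist := enc_dist s r u u' hkey this
    have hsubE : (Finset.univ.filter
        (fun S : Finset (Fin s) => rmUnifiedEnc s r u S ≠ rmUnifiedEnc s r u' S)) ⊆ E := by
      intro S hS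
      simp only [Finset.mem_filter, Finset.mem_univ, true_and] at hS
      by_contra h
      exact hS (henc S h)
    have := le_trans hdist (le_trans (Finset.card_le_card hsubE) hE)
    have hpos : 1 ≤ 2 ^ (s - r) := Nat.one_le_two_pow
    omega
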